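/- Let M = (M(α), M(β)) be a Kronecker representation with M(α), M(β) ∈ Mat_{d_2,d_1}(k), and λ ∈ k. For n ≥ 1, dim Hom(R_n(λ), M) = n·d_1 - rank R_n(λ,M), where R_n(λ) = (E_n, J_n(λ)) is the regular indecomposable with parameter λ, and R_n(λ,M) is the n×n lower block bidiagonal matrix with λM(α)-M(β) on the block diagonal and M(α) on the block subdiagonal. -/

import Mathlib

/-- The `n × n` Jordan cell with eigenvalue `lam`. -/
def jordanCell {k : Type} [Field k] (n : ℕ) (lam : k) : Matrix (Fin n) (Fin n) k :=
  fun a b => if a = b then lam else if (a : ℕ) + 1 = (b : ℕ) then 1 else 0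

/-- The space of morphisms of Kronecker representations `R_n(lam) → M` where
`R_n(lam) = (E_n, J_n(lam))`: pairs `(X, Y)` with `M(α) X = Y` and
`M(β) X = Y J_n(lam)`. -/
def homFromRegular {k : Type} [Field k] (d1 d2 n : ℕ) (lam : k)
    (Mα Mβ : Matrix (Fin d2) (Fin d1) k) :
    Submodule k (Matrix (Fin d1) (Fin n) k × Matrix (Fin d2) (Fin n) k) where
  carrier := {p | Mα * p.1 = p.2 ∧ Mβ * p.1 = p.2 * jordanCell n lam}
  add_mem' := by
    rintro x y ⟨hx1, hx2⟩ ⟨hy1, hy2⟩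
    constructor <;> simp only [Prod.fst_add, Prod.snd_add, Matrix.mul_add,
      Matrix.add_mul, hx1, hx2, hy1, hy2]
  zero_mem' := by simp
  smul_mem' := by
    rintro c x ⟨hx1, hx2⟩
    constructor <;> simp only [Prod.smul_fst, Prod.smul_snd, Matrix.mul_smul,
      Matrix.smul_mul, hx1, hx2]

/-- The block matrix `R_n(lam, M)`: `n × n` lower block bidiagonal with
`lam • M(α) - M(β)` on the block diagonal and `M(α)` on the block subdiagonal. -/
def regularBlockMat {k : Type} [Field k] (d1 d2 : ℕ) (lam : k)
    (Mα Mβ : Matrix (Fin d2) (Fin d1) k) (n : ℕ) :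
    Matrix (Fin n × Fin d2) (Fin n × Fin d1) k :=
  fun rp cq =>
    if (rp.1 : ℕ) = (cq.1 : ℕ) then lam * Mα rp.2 cq.2 - Mβ rp.2 cq.2
    else if (rp.1 : ℕ) = (cq.1 : ℕ) + 1 then Mα rp.2 cq.2 else 0

lemma ite_nested_split {k : Type} [AddZeroClass k] (c c' : Prop) [Decidable c] [Decidable c']
    (h : ¬ (c ∧ c')) (a b : k) :
    (if c then a else if c' then b else 0) = (if c then a else 0) + (if c' then b else 0) := by
  split_ifs with h1 h2 <;> simp_all

lemma key {k : Type} [Field k] (d1 d2 n : ℕ) (lam : k)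
    (Mα Mβ : Matrix (Fin d2) (Fin d1) k) (X : Matrix (Fin d1) (Fin n) k)
    (j : Fin n) (i : Fin d2) :
    (regularBlockMat d1 d2 lam Mα Mβ n).mulVec (fun p => X p.2 p.1) (j, i)
      = ((Mα * X) * jordanCell n lam) i j - (Mβ * X) i j := by
  simp only [Matrix.mulVec, Matrix.mul_apply, regularBlockMat, jordanCell, dotProduct]
  rw [Fintype.sum_prod_type]
  have L : ∀ q : Fin n, (∑ b, (if (j:ℕ) = (q:ℕ) then lam * Mα i b - Mβ i b
      else if (j:ℕ) = (q:ℕ) + 1 then Mα i b else 0) * X b q)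
      = (if j = q then ∑ b, (lam * (Mα i b * X b q) - Mβ i b * X b q) else 0)
        + (if (j:ℕ) = (q:ℕ) + 1 then ∑ b, Mα i b * X b q else 0) := by
    intro q
    rcases eq_or_ne (j:ℕ) (q:ℕ) with h | h
    · have hjq : j = q := Fin.ext h
      subst hjq
      simp [sub_mul, mul_assoc]
    · have hjq : j ≠ q := fun e => h (by rw [e])
      simp only [h, if_false, hjq, zero_add, ite_mul, zero_mul]
      split_ifs <;> simp
  simp only [L, Finset.sum_add_distrib, Finset.sum_ite_eq, Finset.mem_univ, if_true]
  have R : ∀ a : Fin n, (∑ b, Mα i b * X b a) * (if a = j then lam else if (a:ℕ)+1 = (j:ℕ) then 1 else 0)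
      = (if j = a then ∑ b, lam * (Mα i b * X b a) else 0)
        + (if (j:ℕ) = (a:ℕ) + 1 then ∑ b, Mα i b * X b a else 0) := by
    intro a
    rcases eq_or_ne j a with h | h
    · subst h
      simp [Finset.mul_sum, mul_comm, show ¬((j:ℕ) = (j:ℕ)+1) from by omega]
    · have h' : a ≠ j := h.symm
      simp only [h, if_false, h', zero_add]
      split_ifs <;> first | omega | simp
  simp only [R, Finset.sum_add_distrib, Finset.sum_ite_eq, Finset.mem_univ, if_true,
    Finset.sum_sub_distrib]
  ring

lemma mem_iff {k : Type} [Field k] (d1 d2 n : ℕ) (lam : k)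
    (Mα Mβ : Matrix (Fin d2) (Fin d1) k)
    (p : Matrix (Fin d1) (Fin n) k × Matrix (Fin d2) (Fin n) k) :
    p ∈ ({p | Mα * p.1 = p.2 ∧ Mβ * p.1 = p.2 * jordanCell n lam} :
        Set (Matrix (Fin d1) (Fin n) k × Matrix (Fin d2) (Fin n) k)) ↔
      Mα * p.1 = p.2 ∧
        (regularBlockMat d1 d2 lam Mα Mβ n).mulVec (fun q => p.1 q.2 q.1) = 0 := by
  constructor
  · rintro ⟨h1, h2⟩
    refine ⟨h1, funext fun ji => ?_⟩
    rw [key, h1, ← h2, sub_self]; rfl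
  · rintro ⟨h1, h2⟩
    refine ⟨h1, ?_⟩
    ext i j
    have := congrFun h2 (j, i)
    rw [key] at this
    rw [h1] at this
    simpa [sub_eq_zero, eq_comm] using this

noncomputable def homEquivKer {k : Type} [Field k] (d1 d2 n : ℕ) (lam : k)
    (Mα Mβ : Matrix (Fin d2) (Fin d1) k) :
    {p : Matrix (Fin d1) (Fin n) k × Matrix (Fin d2) (Fin n) k //
        Mα * p.1 = p.2 ∧ Mβ * p.1 = p.2 * jordanCell n lam} ≃
      LinearMap.ker (regularBlockMat d1 d2 lam Mα Mβ n).mulVecLin where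
  toFun p := ⟨fun q => p.1.1 q.2 q.1, by
    have := (mem_iff d1 d2 n lam Mα Mβ p.1).mp p.2
    simpa [LinearMap.mem_ker, Matrix.mulVecLin_apply] using this.2⟩
  invFun v := ⟨(Matrix.of fun b q => v.1 (q, b), Mα * Matrix.of fun b q => v.1 (q, b)), by
    refine (mem_iff d1 d2 n lam Mα Mβ _).mpr ⟨rfl, ?_⟩
    have h := LinearMap.mem_ker.mp v.2
    rw [Matrix.mulVecLin_apply] at h
    exact h⟩
  left_inv p := by
    apply Subtype.ext
    exact Prod.ext rfl p.2.1
  right_inv v := by ext ⟨q, b⟩; rfl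

noncomputable def homLinEquiv {k : Type} [Field k] (d1 d2 n : ℕ) (lam : k)
    (Mα Mβ : Matrix (Fin d2) (Fin d1) k) :
    homFromRegular d1 d2 n lam Mα Mβ ≃ₗ[k]
      LinearMap.ker (regularBlockMat d1 d2 lam Mα Mβ n).mulVecLin where
  toFun p := ⟨fun q => p.1.1 q.2 q.1, by
    have h : Mα * p.1.1 = p.1.2 ∧ Mβ * p.1.1 = p.1.2 * jordanCell n lam := p.2
    have := (mem_iff d1 d2 n lam Mα Mβ p.1).mp h
    simpa [LinearMap.mem_ker, Matrix.mulVecLin_apply] using this.2⟩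
  map_add' a b := rfl
  map_smul' c a := rfl
  invFun v := ⟨(Matrix.of fun b q => v.1 (q, b), Mα * Matrix.of fun b q => v.1 (q, b)), by
    refine (mem_iff d1 d2 n lam Mα Mβ _).mpr ⟨rfl, ?_⟩
    have h := LinearMap.mem_ker.mp v.2
    rw [Matrix.mulVecLin_apply] at h
    exact h⟩
  left_inv p := by
    apply Subtype.ext
    have h : Mα * p.1.1 = p.1.2 ∧ Mβ * p.1.1 = p.1.2 * jordanCell n lam := p.2
    exact Prod.ext rfl h.1
  right_inv v := by ext ⟨q, b⟩; rfl

/-- for a Kronecker representation `M = (M(α), M(β))`, `lam ∈ k` and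
`n ≥ 1`, `dim Hom(R_n(lam), M) = n d_1 - rank R_n(lam, M)`. -/
theorem dim_hom_from_regular {k : Type} [Field k] (d1 d2 : ℕ) (lam : k)
    (Mα Mβ : Matrix (Fin d2) (Fin d1) k) (n : ℕ) (hn : 1 ≤ n) :
    Module.finrank k (homFromRegular d1 d2 n lam Mα Mβ)
      = n * d1 - (regularBlockMat d1 d2 lam Mα Mβ n).rank := by
  rw [LinearEquiv.finrank_eq (homLinEquiv d1 d2 n lam Mα Mβ)]
  have h := LinearMap.finrank_range_add_finrank_ker
    (regularBlockMat d1 d2 lam Mα Mβ n).mulVecLin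
  have hr : (regularBlockMat d1 d2 lam Mα Mβ n).rank
      = Module.finrank k (LinearMap.range (regularBlockMat d1 d2 lam Mα Mβ n).mulVecLin) := rfl
  have hd : Module.finrank k (Fin n × Fin d1 → k) = n * d1 := by
    simp [Module.finrank_fintype_fun_eq_card]
  rw [hd] at h
  omega
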